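/- Let G^s = I_n ⊗ (Gᵃ − Gᵇ) + 𝟏_n𝟏_nᵀ ⊗ Gᵇ with Gᵃ, Gᵇ symmetric p×p matrices and n ≥ 2, and define G^T = (1/n)(Gᵃ + (n−1)Gᵇ). Then G^s ⪰ 0 if and only if G^T ⪰ 0 and Gᵃ − G^T ⪰ 0. -/

import Mathlib

open Matrix Kronecker

-- real symmetric → hermitian
lemma symm_herm {p : ℕ} {M : Matrix (Fin p) (Fin p) ℝ} (h : M.IsSymm) : M.IsHermitian := by
  ext i j
  simpa [Matrix.conjTranspose_apply] using congrFun (congrFun h.eq i) j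

lemma psd_smul {p : ℕ} {M : Matrix (Fin p) (Fin p) ℝ} {c : ℝ} (hc : 0 ≤ c)
    (hM : M.PosSemidef) : (c • M).PosSemidef := by
  refine posSemidef_iff_dotProduct_mulVec.mpr ⟨Matrix.IsHermitian.ext fun i j => ?_, fun x => ?_⟩
  · have := hM.1.apply i j
    simp only [star_trivial] at this ⊢
    simp [Matrix.smul_apply, this]
  · rw [Matrix.smul_mulVec, dotProduct_smul]
    exact mul_nonneg hc (hM.dotProduct_mulVec_nonneg x)

lemma psd_kron {n p : ℕ} {M : Matrix (Fin n) (Fin n) ℝ} {N : Matrix (Fin p) (Fin p) ℝ}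
    (hM : M.PosSemidef) (hN : N.PosSemidef) : (M ⊗ₖ N).PosSemidef := by
  exact hM.kronecker hN

lemma quad_kron {n p : ℕ} (M : Matrix (Fin n) (Fin n) ℝ) (N : Matrix (Fin p) (Fin p) ℝ)
    (c : Fin n → ℝ) (y : Fin p → ℝ) :
    (fun ik : Fin n × Fin p => c ik.1 * y ik.2) ⬝ᵥ
      ((M ⊗ₖ N) *ᵥ fun ik : Fin n × Fin p => c ik.1 * y ik.2) =
      (c ⬝ᵥ M *ᵥ c) * (y ⬝ᵥ N *ᵥ y) := by
  simp only [dotProduct, Matrix.mulVec, Matrix.kroneckerMap_apply,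
    Fintype.sum_prod_type]
  rw [Finset.sum_mul_sum]
  refine Finset.sum_congr rfl fun i _ => ?_
  refine Finset.sum_congr rfl fun k _ => ?_
  have : (c i * ∑ j : Fin n, M i j * c j) * (y k * ∑ l : Fin p, N k l * y l)
      = c i * y k * ((∑ j : Fin n, M i j * c j) * ∑ l : Fin p, N k l * y l) := by ring
  rw [this, Finset.sum_mul_sum]
  simp only [Finset.mul_sum]
  exact Finset.sum_congr rfl fun j _ => Finset.sum_congr rfl fun l _ => by ring

lemma quad_one {n : ℕ} (c : Fin n → ℝ) :
    c ⬝ᵥ (1 : Matrix (Fin n) (Fin n) ℝ) *ᵥ c = ∑ i, c i ^ 2 := by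
  simp [Matrix.one_mulVec, dotProduct, sq]

lemma quad_J {n : ℕ} (c : Fin n → ℝ) :
    c ⬝ᵥ (Matrix.of fun _ _ : Fin n => (1 : ℝ)) *ᵥ c = (∑ i, c i) ^ 2 := by
  simp [dotProduct, Matrix.mulVec, sq, ← Finset.sum_mul]

lemma sub_kron {n p : ℕ} (M M' : Matrix (Fin n) (Fin n) ℝ) (N : Matrix (Fin p) (Fin p) ℝ) :
    (M - M') ⊗ₖ N = M ⊗ₖ N - M' ⊗ₖ N := by
  ext ⟨i, k⟩ ⟨j, l⟩
  simp [Matrix.sub_apply, sub_mul]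

theorem stmt_8 (n p : ℕ) (hn : 2 ≤ n) (Ga Gb : Matrix (Fin p) (Fin p) ℝ)
    (hGa : Ga.IsSymm) (hGb : Gb.IsSymm) :
    ((1 : Matrix (Fin n) (Fin n) ℝ) ⊗ₖ (Ga - Gb) +
        (Matrix.of fun _ _ : Fin n => (1 : ℝ)) ⊗ₖ Gb).PosSemidef ↔
      ((n : ℝ)⁻¹ • (Ga + ((n : ℝ) - 1) • Gb)).PosSemidef ∧
        (Ga - (n : ℝ)⁻¹ • (Ga + ((n : ℝ) - 1) • Gb)).PosSemidef := by
  have hn2 : (2 : ℝ) ≤ (n : ℝ) := by exact_mod_cast hn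
  have hn0 : (0 : ℝ) < (n : ℝ) := by linarith
  have hne : (n : ℝ) ≠ 0 := ne_of_gt hn0
  have hnm1 : (0:ℝ) < (n : ℝ) - 1 := by linarith
  set J : Matrix (Fin n) (Fin n) ℝ := Matrix.of fun _ _ : Fin n => (1 : ℝ) with hJ
  -- the key matrix identities
  have hGaGT : Ga - (n : ℝ)⁻¹ • (Ga + ((n : ℝ) - 1) • Gb)
      = (((n : ℝ) - 1) / (n : ℝ)) • (Ga - Gb) := by
    ext i j
    simp only [Matrix.sub_apply, Matrix.smul_apply, Matrix.add_apply, smul_eq_mul]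
    field_simp
    ring
  have hGT : (n : ℝ)⁻¹ • (Ga + ((n : ℝ) - 1) • Gb) = (n : ℝ)⁻¹ • (Ga - Gb) + Gb := by
    ext i j
    simp only [Matrix.sub_apply, Matrix.smul_apply, Matrix.add_apply, smul_eq_mul]
    field_simp
    ring
  constructor
  · intro h
    -- A := Ga - Gb is PSD
    have keyA : ∀ y : Fin p → ℝ, 0 ≤ y ⬝ᵥ (Ga - Gb) *ᵥ y := by
      intro y
      set i0 : Fin n := ⟨0, by omega⟩ with hi0def
      set i1 : Fin n := ⟨1, by omega⟩ with hi1def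
      have h01 : i0 ≠ i1 := by
        simp [hi0def, hi1def, Fin.ext_iff]
      set c : Fin n → ℝ := Pi.single i0 1 - Pi.single i1 1 with hc
      have h0 := h.dotProduct_mulVec_nonneg (fun ik : Fin n × Fin p => c ik.1 * y ik.2)
      rw [show star (fun ik : Fin n × Fin p => c ik.1 * y ik.2)
            = fun ik : Fin n × Fin p => c ik.1 * y ik.2 from funext fun i => star_trivial _,
        Matrix.add_mulVec, dotProduct_add, quad_kron, quad_kron] at h0
      have hcc : c ⬝ᵥ (1 : Matrix (Fin n) (Fin n) ℝ) *ᵥ c = 2 := by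
        rw [quad_one]
        have hpt : ∀ i : Fin n, c i ^ 2
            = (Pi.single i0 1 : Fin n → ℝ) i + (Pi.single i1 1 : Fin n → ℝ) i := by
          intro i
          rw [hc]
          by_cases hi0 : i = i0
          · have hi1 : i ≠ i1 := by rw [hi0]; exact h01
            rw [hc] at *
            simp [Pi.single_apply, hi0, hi1, if_neg h01]
          · by_cases hi1 : i = i1 <;>
              simp [Pi.single_apply, hi0, hi1, if_neg (Ne.symm h01)]
        rw [Finset.sum_congr rfl fun i _ => hpt i, Finset.sum_add_distrib]
        simp [Finset.sum_pi_single']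
        norm_num
      have hcs : c ⬝ᵥ J *ᵥ c = 0 := by
        rw [quad_J]
        have hzero : (∑ i, c i) = 0 := by
          rw [hc]
          simp [Finset.sum_sub_distrib, Finset.sum_pi_single']
        rw [hzero]; norm_num
      rw [hcc, hcs] at h0
      linarith
    have hermA : (Ga - Gb).IsHermitian := symm_herm (hGa.sub hGb)
    have psdA : (Ga - Gb).PosSemidef :=
      posSemidef_iff_dotProduct_mulVec.mpr ⟨hermA, fun x => by simpa [show star x = x from funext fun i => star_trivial _] using keyA x⟩
    have keyT : ∀ y : Fin p → ℝ, 0 ≤ y ⬝ᵥ ((n : ℝ)⁻¹ • (Ga + ((n : ℝ) - 1) • Gb)) *ᵥ y := by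
      intro y
      set c : Fin n → ℝ := fun _ => 1 with hc
      have h0 := h.dotProduct_mulVec_nonneg (fun ik : Fin n × Fin p => c ik.1 * y ik.2)
      rw [show star (fun ik : Fin n × Fin p => c ik.1 * y ik.2)
            = fun ik : Fin n × Fin p => c ik.1 * y ik.2 from funext fun i => star_trivial _,
        Matrix.add_mulVec, dotProduct_add, quad_kron, quad_kron] at h0
      have hcc : c ⬝ᵥ (1 : Matrix (Fin n) (Fin n) ℝ) *ᵥ c = (n : ℝ) := by
        rw [quad_one]; simp [hc]
      have hcs : c ⬝ᵥ J *ᵥ c = (n : ℝ) ^ 2 := by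
        rw [quad_J]; simp [hc]
      rw [hcc, hcs] at h0
      have hA := keyA y
      rw [hGT, Matrix.add_mulVec, dotProduct_add, Matrix.smul_mulVec,
        dotProduct_smul, smul_eq_mul]
      have h3 : 0 ≤ (((n:ℝ))^2)⁻¹ * ((n:ℝ) * (y ⬝ᵥ (Ga - Gb) *ᵥ y) + (n:ℝ)^2 * (y ⬝ᵥ Gb *ᵥ y)) :=
        mul_nonneg (by positivity) h0
      have h4 : (((n:ℝ))^2)⁻¹ * ((n:ℝ) * (y ⬝ᵥ (Ga - Gb) *ᵥ y) + (n:ℝ)^2 * (y ⬝ᵥ Gb *ᵥ y))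
          = (n:ℝ)⁻¹ * (y ⬝ᵥ (Ga - Gb) *ᵥ y) + y ⬝ᵥ Gb *ᵥ y := by
        field_simp
      linarith
    have hermT : ((n : ℝ)⁻¹ • (Ga + ((n : ℝ) - 1) • Gb)).IsHermitian :=
      symm_herm ((hGa.add (hGb.smul _)).smul _)
    refine ⟨posSemidef_iff_dotProduct_mulVec.mpr ⟨hermT, fun x => by
        simpa [show star x = x from funext fun i => star_trivial _] using keyT x⟩, ?_⟩
    rw [hGaGT]
    exact psd_smul (div_nonneg (by linarith) (le_of_lt hn0)) psdA
  · rintro ⟨h1, h2⟩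
    have psdA : (Ga - Gb).PosSemidef := by
      have hrw : Ga - Gb = ((n : ℝ) / ((n : ℝ) - 1)) •
          (Ga - (n : ℝ)⁻¹ • (Ga + ((n : ℝ) - 1) • Gb)) := by
        rw [hGaGT, smul_smul]
        rw [show (n : ℝ) / ((n : ℝ) - 1) * (((n : ℝ) - 1) / (n : ℝ)) = 1 by field_simp]
        rw [one_smul]
      rw [hrw]
      exact psd_smul (div_nonneg (le_of_lt hn0) (le_of_lt hnm1)) h2
    have psdJ : J.PosSemidef := by
      refine posSemidef_iff_dotProduct_mulVec.mpr ⟨Matrix.IsHermitian.ext fun i j => by simp [hJ], fun x => ?_⟩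
      rw [show star x = x from funext fun i => star_trivial _, quad_J]
      positivity
    have psdImP : ((1 : Matrix (Fin n) (Fin n) ℝ) - (n : ℝ)⁻¹ • J).PosSemidef := by
      refine posSemidef_iff_dotProduct_mulVec.mpr ⟨Matrix.IsHermitian.ext fun i j => ?_, fun x => ?_⟩
      · simp [hJ, Matrix.sub_apply, Matrix.smul_apply, Matrix.one_apply, eq_comm]
      · rw [show star x = x from funext fun i => star_trivial _,
          Matrix.sub_mulVec, dotProduct_sub, Matrix.smul_mulVec,
          dotProduct_smul, quad_one, quad_J, smul_eq_mul]
        have hCS : (∑ i, x i) ^ 2 ≤ (n : ℝ) * ∑ i, x i ^ 2 := by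
          have := sq_sum_le_card_mul_sum_sq (s := Finset.univ) (f := x)
          simpa using this
        have h2' : (n : ℝ)⁻¹ * (∑ i, x i) ^ 2 ≤ (n : ℝ)⁻¹ * ((n : ℝ) * ∑ i, x i ^ 2) :=
          mul_le_mul_of_nonneg_left hCS (by positivity)
        rw [inv_mul_cancel_left₀ hne] at h2'
        linarith
    have hsplit : (1 : Matrix (Fin n) (Fin n) ℝ) ⊗ₖ (Ga - Gb) + J ⊗ₖ Gb
        = ((1 : Matrix (Fin n) (Fin n) ℝ) - (n : ℝ)⁻¹ • J) ⊗ₖ (Ga - Gb)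
          + J ⊗ₖ ((n : ℝ)⁻¹ • (Ga + ((n : ℝ) - 1) • Gb)) := by
      rw [hGT, Matrix.kronecker_add, sub_kron, Matrix.smul_kronecker,
        Matrix.kronecker_smul]
      abel
    rw [hsplit]
    exact (psd_kron psdImP psdA).add (psd_kron psdJ h1)
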